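/- Let V be a complex Hermitian vector space with a unitary C-action, X = V_ℝ ⊕ V_ℝ ≅ T*V with quaternionic complex structures I(x,y)=(Ix,-Iy) and J(x,y)=(-y,x). For ξ ∈ 𝔠 acting diagonally on X and (x,y) ∈ X decomposed into ξ-eigencomponents x = Σx_i, y = Σy_i with eigenvalues √(-1)λ_i, the curve (x(t),y(t)) = exp(tJξ)(x,y) satisfies ⟨ξ x(t), y(t)⟩ = Σ_i λ_i [ (1/2) sinh(2tλ_i)(‖x_i‖² + ‖y_i‖²) + cosh(2tλ_i) ω(x_i,y_i) ], and the limit of this expression as t→∞ is always ≥ 0. -/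

import Mathlib

/-!
STATEMENT 8: Let `V` be a complex Hermitian vector space with a unitary action,
`X = V_ℝ ⊕ V_ℝ ≅ T*V`. Let `ξ` be skew-Hermitian with eigencomponent
decompositions `x = ∑ xc i`, `y = ∑ yc i` (eigenvalue `√-1 lam i`, pairwise
orthogonal eigenspaces). The curve `(x(t), y(t)) = exp (t J ξ) (x, y)` is given
by `x(t) = ∑ (cosh(t lam i) • xc i - sinh(t lam i) • (I yc i))`,
`y(t) = ∑ (sinh(t lam i) • (I xc i) + cosh(t lam i) • yc i)`, and
`⟨ξ x(t), y(t)⟩ = ∑ lam i * ((1/2) sinh(2 t lam i)(‖xc i‖² + ‖yc i‖²)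
  + cosh(2 t lam i) ω(xc i, yc i))`; the limit of this expression as `t → ∞`
exists in `EReal` and is always `≥ 0`.
-/

open scoped InnerProductSpace
open Filter

/-- The real part of the diagonal inner-product term. -/
lemma statement8_diagRe (V : Type*) [NormedAddCommGroup V] [InnerProductSpace ℂ V]
    (l c s : ℝ) (x y : V) :
    (⟪(((c*l:ℝ):ℂ) * Complex.I) • x + ((s*l:ℝ):ℂ) • y,
       ((s:ℝ):ℂ) • (Complex.I • x) + ((c:ℝ):ℂ) • y⟫_ℂ).re
    = l * (s*c*(‖x‖^2+‖y‖^2) + (c^2+s^2) * (⟪x,y⟫_ℂ).im) := by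
  have h1 : ⟪x, x⟫_ℂ = (‖x‖:ℂ)^2 := inner_self_eq_norm_sq_to_K x
  have h2 : ⟪y, y⟫_ℂ = (‖y‖:ℂ)^2 := inner_self_eq_norm_sq_to_K y
  have h3 : ⟪y, x⟫_ℂ = starRingEnd ℂ ⟪x, y⟫_ℂ := (inner_conj_symm y x).symm
  have hR : ∀ (r : ℝ) (a b : V), ⟪a, r • b⟫_ℂ = (r:ℂ) * ⟪a, b⟫_ℂ := fun r a b => by
    rw [RCLike.real_smul_eq_coe_smul (K := ℂ), inner_smul_right]; rfl
  simp only [inner_add_left, inner_add_right, inner_smul_left, inner_smul_right,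
    h1, h2, h3, hR, Complex.add_re, Complex.mul_re, Complex.mul_im, Complex.add_im,
    Complex.conj_re, Complex.conj_im, Complex.I_re, Complex.I_im, Complex.ofReal_re,
    Complex.ofReal_im, ← Complex.ofReal_pow, map_mul, Complex.conj_ofReal, Complex.conj_I,
    Complex.neg_re, Complex.neg_im]
  ring

/-- Rewriting each summand in exponential form. -/
lemma statement8_term (lam A B t : ℝ) :
    lam * ((1/2 : ℝ) * Real.sinh (2 * t * lam) * A + Real.cosh (2 * t * lam) * B)
    = (|lam| * A / 4 + lam * B / 2) * Real.exp (2 * t * |lam|)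
      + (lam * B / 2 - |lam| * A / 4) * Real.exp (-(2 * t * |lam|)) := by
  rcases abs_cases lam with ⟨h1, h2⟩ | ⟨h1, h2⟩ <;> rw [h1]
  · rw [Real.sinh_eq, Real.cosh_eq]; ring
  · rw [show (2*t*-lam : ℝ) = -(2*t*lam) from by ring, neg_neg,
      Real.sinh_eq, Real.cosh_eq]; ring

theorem statement8
    (V : Type*) [NormedAddCommGroup V] [InnerProductSpace ℂ V]
    (ι : Type*) [Fintype ι]
    (lam : ι → ℝ) (xc yc : ι → V)
    (ξ : V →ₗ[ℂ] V)
    (hskew : ∀ a b : V, ⟪ξ a, b⟫_ℂ = - ⟪a, ξ b⟫_ℂ)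
    (heigx : ∀ i, ξ (xc i) = ((lam i : ℂ) * Complex.I) • xc i)
    (heigy : ∀ i, ξ (yc i) = ((lam i : ℂ) * Complex.I) • yc i)
    (horthx : ∀ i j, i ≠ j → ⟪xc i, xc j⟫_ℂ = 0)
    (horthy : ∀ i j, i ≠ j → ⟪yc i, yc j⟫_ℂ = 0)
    (horthxy : ∀ i j, i ≠ j → ⟪xc i, yc j⟫_ℂ = 0)
    -- ω = Im h and the real scalar product ⟨·,·⟩ = Re h :
    (ω : V → V → ℝ) (hω : ∀ a b, ω a b = (⟪a, b⟫_ℂ).im)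
    (sp : V → V → ℝ) (hsp : ∀ a b, sp a b = (⟪a, b⟫_ℂ).re)
    -- the curve (x(t), y(t)) = exp(t J ξ)(x, y):
    (xt yt : ℝ → V)
    (hxt : ∀ t, xt t = ∑ i, ((Real.cosh (t * lam i) : ℂ) • xc i
        - (Real.sinh (t * lam i) : ℂ) • (Complex.I • yc i)))
    (hyt : ∀ t, yt t = ∑ i, ((Real.sinh (t * lam i) : ℂ) • (Complex.I • xc i)
        + (Real.cosh (t * lam i) : ℂ) • yc i)) :
    (∀ t : ℝ, sp (ξ (xt t)) (yt t)
        = ∑ i, lam i * ((1/2 : ℝ) * Real.sinh (2 * t * lam i) * (‖xc i‖ ^ 2 + ‖yc i‖ ^ 2)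
            + Real.cosh (2 * t * lam i) * ω (xc i) (yc i)))
    ∧ (∃ L : EReal, 0 ≤ L ∧
        Tendsto (fun t : ℝ => ((sp (ξ (xt t)) (yt t) : ℝ) : EReal)) atTop (nhds L)) := by
  -- Part 1: the explicit formula.
  have key : ∀ t : ℝ, sp (ξ (xt t)) (yt t)
      = ∑ i, lam i * ((1/2 : ℝ) * Real.sinh (2 * t * lam i) * (‖xc i‖ ^ 2 + ‖yc i‖ ^ 2)
          + Real.cosh (2 * t * lam i) * ω (xc i) (yc i)) := by
    intro t
    have hξa : ∀ i, ξ ((Real.cosh (t * lam i) : ℂ) • xc i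
        - (Real.sinh (t * lam i) : ℂ) • (Complex.I • yc i))
        = (((Real.cosh (t*lam i) * lam i : ℝ):ℂ) * Complex.I) • xc i
          + ((Real.sinh (t*lam i) * lam i : ℝ):ℂ) • yc i := by
      intro i
      rw [map_sub, map_smul, map_smul, map_smul, heigx, heigy]
      match_scalars
      · ring
      · linear_combination (-(Complex.sinh ((t:ℂ) * (lam i:ℂ)) * (lam i:ℂ))) * Complex.I_sq
    have hyx : ∀ i j, i ≠ j → ⟪yc i, xc j⟫_ℂ = 0 := fun i j h => by
      rw [← inner_conj_symm, horthxy j i h.symm, map_zero]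
    rw [hsp, hxt, hyt, map_sum, sum_inner, Complex.re_sum]
    refine Finset.sum_congr rfl (fun i _ => ?_)
    rw [hξa, inner_sum, Complex.re_sum]
    rw [Finset.sum_eq_single i (fun j _ hne => by
      simp [inner_add_left, inner_add_right, inner_smul_left, inner_smul_right,
        horthx i j (Ne.symm hne), horthy i j (Ne.symm hne),
        horthxy i j (Ne.symm hne), hyx i j (Ne.symm hne)])
      (fun h => absurd (Finset.mem_univ i) h)]
    rw [statement8_diagRe, hω]
    have e1 : Real.sinh (2*t*lam i) = 2 * Real.sinh (t*lam i) * Real.cosh (t*lam i) := by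
      rw [show 2*t*lam i = 2*(t*lam i) by ring, Real.sinh_two_mul]
    have e2 : Real.cosh (2*t*lam i) = Real.cosh (t*lam i)^2 + Real.sinh (t*lam i)^2 := by
      rw [show 2*t*lam i = 2*(t*lam i) by ring, Real.cosh_two_mul]
    rw [e1, e2]; ring
  refine ⟨key, ?_⟩
  -- Part 2: the limit.
  set A : ι → ℝ := fun i => ‖xc i‖ ^ 2 + ‖yc i‖ ^ 2 with hA
  set B : ι → ℝ := fun i => ω (xc i) (yc i) with hB
  set P : ι → ℝ := fun i => |lam i| * A i / 4 + lam i * B i / 2 with hP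
  set Q : ι → ℝ := fun i => lam i * B i / 2 - |lam i| * A i / 4 with hQ
  have hBA : ∀ i, |B i| ≤ A i / 2 := by
    intro i
    have h1 : |(⟪xc i, yc i⟫_ℂ).im| ≤ ‖⟪xc i, yc i⟫_ℂ‖ := by
      exact Complex.abs_im_le_norm _
    have h2 : ‖⟪xc i, yc i⟫_ℂ‖ ≤ ‖xc i‖ * ‖yc i‖ := norm_inner_le_norm _ _
    have h3 : ‖xc i‖ * ‖yc i‖ ≤ (‖xc i‖^2 + ‖yc i‖^2) / 2 := by
      nlinarith [sq_nonneg (‖xc i‖ - ‖yc i‖)]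
    simp only [hB, hA, hω]
    linarith
  have hAnn : ∀ i, 0 ≤ A i := fun i => by positivity
  have hPnn : ∀ i, 0 ≤ P i := by
    intro i
    have h1 : -(|lam i| * (A i / 2)) ≤ lam i * B i := by
      have := neg_abs_le (lam i * B i)
      have h2 : |lam i * B i| ≤ |lam i| * (A i / 2) := by
        rw [abs_mul]
        exact mul_le_mul_of_nonneg_left (hBA i) (abs_nonneg _)
      linarith
    simp only [hP]; linarith
  have hQnp : ∀ i, Q i ≤ 0 := by
    intro i
    have h1 : lam i * B i ≤ |lam i| * (A i / 2) := by
      have := le_abs_self (lam i * B i)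
      have h2 : |lam i * B i| ≤ |lam i| * (A i / 2) := by
        rw [abs_mul]
        exact mul_le_mul_of_nonneg_left (hBA i) (abs_nonneg _)
      linarith
    simp only [hQ]; linarith
  have keyf : ∀ t : ℝ, sp (ξ (xt t)) (yt t)
      = ∑ i, (P i * Real.exp (2 * t * |lam i|) + Q i * Real.exp (-(2 * t * |lam i|))) := by
    intro t
    rw [key t]
    exact Finset.sum_congr rfl fun i _ => statement8_term (lam i) (A i) (B i) t
  by_cases hall : ∀ i, P i = 0
  · -- everything tends to 0
    refine ⟨0, le_refl 0, ?_⟩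
    have h0 : Tendsto (fun t : ℝ => sp (ξ (xt t)) (yt t)) atTop (nhds 0) := by
      have : Tendsto (fun t : ℝ => ∑ i, (P i * Real.exp (2 * t * |lam i|)
          + Q i * Real.exp (-(2 * t * |lam i|)))) atTop (nhds 0) := by
        have hsum0 : (0:ℝ) = ∑ i : ι, (0:ℝ) := by simp
        rw [hsum0]
        refine tendsto_finset_sum _ (fun i _ => ?_)
        rcases eq_or_ne (lam i) 0 with hl | hl
        · have hQ0 : Q i = 0 := by simp [hQ, hl]
          simp [hall i, hQ0]
        · have hexp : Tendsto (fun t : ℝ => Real.exp (-(2 * t * |lam i|))) atTop (nhds 0) := by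
            apply Real.tendsto_exp_atBot.comp
            apply tendsto_neg_atTop_atBot.comp
            exact (tendsto_id.const_mul_atTop two_pos).atTop_mul_const (abs_pos.mpr hl)
          have : Tendsto (fun t : ℝ => P i * Real.exp (2 * t * |lam i|)
              + Q i * Real.exp (-(2 * t * |lam i|))) atTop (nhds (Q i * 0)) := by
            simp only [hall i, zero_mul, zero_add]
            exact hexp.const_mul _
          simpa using this
      exact this.congr (fun t => (keyf t).symm)
    have := (EReal.tendsto_coe (a := (0:ℝ))).mpr h0
    simpa using this
  · push_neg at hall
    obtain ⟨j, hj⟩ := hall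
    have hPj : 0 < P j := lt_of_le_of_ne (hPnn j) (Ne.symm hj)
    have hlj : lam j ≠ 0 := by
      intro h
      apply hj
      simp [hP, h]
    refine ⟨⊤, le_top, ?_⟩
    have hf : Tendsto (fun t : ℝ => sp (ξ (xt t)) (yt t)) atTop atTop := by
      set C : ℝ := ∑ i, Q i with hC
      have hg : Tendsto (fun t : ℝ => P j * Real.exp (2 * t * |lam j|) + C) atTop atTop := by
        apply tendsto_atTop_add_const_right
        apply Tendsto.const_mul_atTop hPj
        apply Real.tendsto_exp_atTop.comp
        exact (tendsto_id.const_mul_atTop two_pos).atTop_mul_const (abs_pos.mpr hlj)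
      apply tendsto_atTop_mono' _ _ hg
      filter_upwards [eventually_ge_atTop (0:ℝ)] with t ht
      rw [keyf t]
      have hsplit : ∑ i, (P i * Real.exp (2 * t * |lam i|) + Q i * Real.exp (-(2 * t * |lam i|)))
          = (∑ i, P i * Real.exp (2 * t * |lam i|))
            + ∑ i, Q i * Real.exp (-(2 * t * |lam i|)) := Finset.sum_add_distrib
      rw [hsplit]
      have h1 : P j * Real.exp (2 * t * |lam j|) ≤ ∑ i, P i * Real.exp (2 * t * |lam i|) :=
        Finset.single_le_sum (f := fun i => P i * Real.exp (2 * t * |lam i|))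
          (fun i _ => mul_nonneg (hPnn i) (Real.exp_pos _).le) (Finset.mem_univ j)
      have h2 : C ≤ ∑ i, Q i * Real.exp (-(2 * t * |lam i|)) := by
        rw [hC]
        refine Finset.sum_le_sum (fun i _ => ?_)
        have he : Real.exp (-(2 * t * |lam i|)) ≤ 1 := by
          rw [Real.exp_le_one_iff]
          have : 0 ≤ 2 * t * |lam i| := by positivity
          linarith
        calc Q i = Q i * 1 := (mul_one _).symm
          _ ≤ Q i * Real.exp (-(2 * t * |lam i|)) := by
              exact mul_le_mul_of_nonpos_left he (hQnp i)
      linarith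
    rw [EReal.tendsto_nhds_top_iff_real]
    intro x
    filter_upwards [hf.eventually_gt_atTop x] with t ht
    exact_mod_cast EReal.coe_lt_coe_iff.mpr ht
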